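/- Let X ⊆ ℝ^d be a full-dimensional polytope and let K ⊆ ℝ^d be a full-dimensional convex body. Then K is ℝ-X-free if and only if for every ℤ-unimodular copy S of X, the Minkowski difference K ÷ S = {x ∈ ℝ^d : S + x ⊆ K} has affine dimension strictly less than d. -/

import Mathlib

open Set Pointwise

noncomputable section

/-- The set of real numbers that are integers (the ring ℤ viewed inside ℝ). -/
def ZSet : Set ℝ := Set.range (fun z : ℤ => (z : ℝ))

/-- `T : ℝ^d → ℝ^d` is an affine `A`-unimodular transformation: `T x = M x + b` with
`M` an integer matrix of determinant `±1` and `b ∈ A^d`. -/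
def IsUnimodularMap {d : ℕ} (A : Set ℝ) (T : (Fin d → ℝ) → (Fin d → ℝ)) : Prop :=
  ∃ (M : Matrix (Fin d) (Fin d) ℤ) (b : Fin d → ℝ),
    (M.det = 1 ∨ M.det = -1) ∧ (∀ i, b i ∈ A) ∧
    ∀ x, T x = (M.map (fun z : ℤ => (z : ℝ))).mulVec x + b

/-- `Y` is an `A`-unimodular copy of `X`. -/
def IsUnimodCopy {d : ℕ} (A : Set ℝ) (X Y : Set (Fin d → ℝ)) : Prop :=
  ∃ T, IsUnimodularMap A T ∧ Y = T '' X

/-- `K` contains an `A`-unimodular copy of `X`. -/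
def ContainsCopy {d : ℕ} (A : Set ℝ) (X K : Set (Fin d → ℝ)) : Prop :=
  ∃ Y, IsUnimodCopy A X Y ∧ Y ⊆ K

/-- `K` is `A`-`X`-free: its relative interior contains no `A`-unimodular copy of `X`. -/
def IsFree {d : ℕ} (A : Set ℝ) (X K : Set (Fin d → ℝ)) : Prop :=
  ∀ Y, IsUnimodCopy A X Y → ¬ Y ⊆ intrinsicInterior ℝ K

/-- A convex body: a nonempty compact convex set. -/
def IsConvexBody {d : ℕ} (K : Set (Fin d → ℝ)) : Prop :=
  Convex ℝ K ∧ IsCompact K ∧ K.Nonempty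

/-- A polytope: the convex hull of a finite set of points. -/
def IsPolytope {d : ℕ} (K : Set (Fin d → ℝ)) : Prop :=
  ∃ F : Set (Fin d → ℝ), F.Finite ∧ K = convexHull ℝ F

/-- The width of `K` along the integer linear functional `u`. -/
def widthAlong {d : ℕ} (u : Fin d → ℤ) (K : Set (Fin d → ℝ)) : ℝ :=
  sSup {w | ∃ x ∈ K, ∃ y ∈ K, w = |(∑ i, (u i : ℝ) * x i) - ∑ i, (u i : ℝ) * y i|}

/-- The lattice width of `K`: the infimum of its widths along nonzero integer functionals. -/
def latticeWidth {d : ℕ} (K : Set (Fin d → ℝ)) : ℝ :=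
  sInf {w | ∃ u : Fin d → ℤ, u ≠ 0 ∧ w = widthAlong u K}

/-- The generalised flatness constant `Flt_d^A(X)`: the supremum of the lattice widths of all
convex bodies containing no `A`-unimodular copy of `X`. -/
def Flt (d : ℕ) (A : Set ℝ) (X : Set (Fin d → ℝ)) : ℝ :=
  sSup {w | ∃ K : Set (Fin d → ℝ), IsConvexBody K ∧ ¬ ContainsCopy A X K ∧ w = latticeWidth K}

/-- The affine dimension of a set: the dimension of the direction of its affine span. -/
def affDim {d : ℕ} (s : Set (Fin d → ℝ)) : ℕ :=
  Module.finrank ℝ (affineSpan ℝ s).direction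

/-- Minkowski difference `K ÷ S = {x | S + x ⊆ K}`. -/
def mDiff {d : ℕ} (K S : Set (Fin d → ℝ)) : Set (Fin d → ℝ) :=
  {x | ∀ s ∈ S, s + x ∈ K}

/-- The standard triangle `Δ₂ = conv{(0,0), (1,0), (0,1)} ⊆ ℝ²`. -/
def stdSimplex2 : Set (Fin 2 → ℝ) := convexHull ℝ {![0, 0], ![1, 0], ![0, 1]}


private lemma convex_mDiff' {d : ℕ} {K S : Set (Fin d → ℝ)} (hK : Convex ℝ K) :
    Convex ℝ (mDiff K S) := by
  intro x hx y hy a b ha hb hab s hs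
  have h := hK (hx s hs) (hy s hs) ha hb hab
  have h2 : a • (s + x) + b • (s + y) = s + (a • x + b • y) := by
    funext i
    simp only [Pi.add_apply, Pi.smul_apply, smul_eq_mul]
    linear_combination s i * hab
  rwa [h2] at h

private lemma intrinsic_eq_interior' {d : ℕ} {K : Set (Fin d → ℝ)}
    (h : affineSpan ℝ K = ⊤) : intrinsicInterior ℝ K = interior K := by
  refine Subset.antisymm ?_ interior_subset_intrinsicInterior
  have hopen : IsOpen ((affineSpan ℝ K : Set (Fin d → ℝ))) := by rw [h]; simp
  have hO : IsOpen (((↑) : (affineSpan ℝ K : Set (Fin d → ℝ)) → (Fin d → ℝ)) ''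
      interior (((↑) : (affineSpan ℝ K : Set (Fin d → ℝ)) → (Fin d → ℝ)) ⁻¹' K)) :=
    hopen.isOpenMap_subtype_val _ isOpen_interior
  refine interior_maximal ?_ hO
  rintro x ⟨y, hy, rfl⟩
  exact Set.mem_preimage.mp (interior_subset hy)

private lemma unimodCopy_id' {d : ℕ} {A : Set ℝ} (h0 : (0:ℝ) ∈ A) (X : Set (Fin d → ℝ)) :
    IsUnimodCopy A X X := by
  refine ⟨id, ⟨1, 0, Or.inl Matrix.det_one, fun i => h0, fun x => ?_⟩, (Set.image_id X).symm⟩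
  simp [Matrix.map_one (fun z : ℤ => (z:ℝ)) Int.cast_zero Int.cast_one, Matrix.one_mulVec]

/-- For a full-dimensional polytope `X` and a full-dimensional convex body `K`: `K` is
ℝ-`X`-free iff for every ℤ-unimodular copy `S` of `X` the Minkowski difference `K ÷ S` has
affine dimension strictly less than `d`. -/
theorem realFree_iff_forall_mDiff_dim_lt (d : ℕ) (X : Set (Fin d → ℝ))
    (hXpoly : IsPolytope X) (hXfull : affineSpan ℝ X = ⊤)
    (K : Set (Fin d → ℝ)) (hK : IsConvexBody K) (hKfull : affineSpan ℝ K = ⊤) :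
    IsFree Set.univ X K ↔
      ∀ S : Set (Fin d → ℝ), IsUnimodCopy ZSet X S → affDim (mDiff K S) < d := by
  obtain ⟨hKconv, hKcomp, hKne⟩ := hK
  have hintr : intrinsicInterior ℝ K = interior K := intrinsic_eq_interior' hKfull
  obtain ⟨F, hF, hXF⟩ := hXpoly
  have hXcomp : IsCompact X := hXF ▸ hF.isCompact_convexHull (𝕜 := ℝ)
  constructor
  · intro hFree S hS
    by_contra hge
    push_neg at hge
    rcases Nat.eq_zero_or_pos d with hd | hd
    · subst hd
      refine hFree X (unimodCopy_id' (Set.mem_univ 0) X) ?_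
      intro x hx
      obtain ⟨y, hy⟩ := Set.Nonempty.intrinsicInterior hKconv hKne
      rwa [Subsingleton.elim x y]
    · obtain ⟨T, ⟨M, b, hdet, hbz, hT⟩, rfl⟩ := hS
      set C := mDiff K (T '' X) with hC
      have hCconv : Convex ℝ C := convex_mDiff' hKconv
      unfold affDim at hge
      have hCne : C.Nonempty := by
        rcases Set.eq_empty_or_nonempty C with hne | hne
        · exfalso
          rw [hne] at hge
          rw [AffineSubspace.span_empty, AffineSubspace.direction_bot, finrank_bot] at hge
          omega
        · exact hne
      have hfin : Module.finrank ℝ (affineSpan ℝ C).direction = d :=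
        le_antisymm ((Submodule.finrank_le _).trans_eq (Module.finrank_fin_fun ℝ)) hge
      have hdir : (affineSpan ℝ C).direction = ⊤ :=
        Submodule.eq_top_of_finrank_eq (hfin.trans (Module.finrank_fin_fun ℝ).symm)
      obtain ⟨x0, hx0⟩ := hCne
      have hspanC : affineSpan ℝ C = ⊤ :=
        (AffineSubspace.direction_eq_top_iff_of_nonempty
          ⟨x0, subset_affineSpan ℝ C hx0⟩).mp hdir
      obtain ⟨x, hx⟩ := hCconv.interior_nonempty_iff_affineSpan_eq_top.mpr hspanC
      obtain ⟨ε, hε, hball⟩ := Metric.mem_nhds_iff.mp (mem_interior_iff_mem_nhds.mp hx)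
      refine hFree ((fun z => (M.map (fun z : ℤ => (z:ℝ))).mulVec z + (b + x)) '' X)
        ⟨_, ⟨M, b + x, hdet, fun i => Set.mem_univ _, fun z => rfl⟩, rfl⟩ ?_
      rw [hintr]
      rintro _ ⟨w, hw, rfl⟩
      rw [mem_interior]
      refine ⟨Metric.ball ((M.map (fun z : ℤ => (z:ℝ))).mulVec w + (b + x)) ε, ?_,
        Metric.isOpen_ball, Metric.mem_ball_self hε⟩
      intro u hu
      have h1 : u - ((M.map (fun z : ℤ => (z:ℝ))).mulVec w + b) ∈ Metric.ball x ε := by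
        rw [Metric.mem_ball, dist_eq_norm]
        rw [Metric.mem_ball, dist_eq_norm] at hu
        convert hu using 2
        abel
      have h2 := hball h1
      have h3 := h2 (T w) (Set.mem_image_of_mem T hw)
      rw [hT w] at h3
      convert h3 using 1
      abel
  · intro hAll Y hY hYsub
    obtain ⟨T, ⟨M, b, hdet, hbA, hT⟩, rfl⟩ := hY
    set M' := M.map (fun z : ℤ => (z:ℝ)) with hM'
    set S := (fun z => M'.mulVec z) '' X with hS
    have hScopy : IsUnimodCopy ZSet X S :=
      ⟨_, ⟨M, 0, hdet, fun i => ⟨0, by simp⟩, fun z => by simp [hM']⟩, rfl⟩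
    have hlt := hAll S hScopy
    have hYint : T '' X ⊆ interior K := hintr ▸ hYsub
    have hSc : IsCompact S :=
      hXcomp.image M'.mulVecLin.continuous_of_finiteDimensional
    have hScomp : IsCompact ((· + b) '' S) :=
      hSc.image (continuous_id.add continuous_const)
    have hsub : (· + b) '' S ⊆ interior K := by
      rintro _ ⟨_, ⟨w, hw, rfl⟩, rfl⟩
      have h := hYint (Set.mem_image_of_mem T hw)
      rwa [hT w] at h
    obtain ⟨δ, hδ, hth⟩ := hScomp.exists_thickening_subset_open isOpen_interior hsub
    have hball : Metric.ball b δ ⊆ mDiff K S := by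
      intro y hy s hs
      have h1 : s + y ∈ Metric.thickening δ ((· + b) '' S) := by
        rw [Metric.mem_thickening_iff]
        exact ⟨s + b, Set.mem_image_of_mem _ hs, by simpa [dist_add_left] using hy⟩
      exact interior_subset (hth h1)
    have hb2 : affineSpan ℝ (Metric.ball b δ) = ⊤ :=
      Metric.isOpen_ball.affineSpan_eq_top (Metric.nonempty_ball.mpr hδ)
    have hspan : affineSpan ℝ (mDiff K S) = ⊤ :=
      top_unique (hb2 ▸ affineSpan_mono ℝ hball)
    have hdim : affDim (mDiff K S) = d := by
      unfold affDim
      rw [hspan, AffineSubspace.direction_top, finrank_top, Module.finrank_fin_fun]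
    omega
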